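/- If X is a D-forced space, then the ideal of nowhere dense subsets of X equals {Y ⊆ X : D \ Y is dense in X for every D ∈ D}. -/
import Mathlib

open Cardinal Set

universe u

variable {X : Type u} [TopologicalSpace X]

/-- A `(𝒟,X)`-mosaic. -/
def IsMosaic (𝒟 : Set (Set X)) (M : Set X) : Prop :=
  ∃ (𝒱 : Set (Set X)) (f : Set X → Set X),
    (∀ V ∈ 𝒱, IsOpen V) ∧ 𝒱.PairwiseDisjoint id ∧ Dense (⋃₀ 𝒱) ∧
    (∀ V ∈ 𝒱, f V ∈ 𝒟) ∧ M = ⋃ V ∈ 𝒱, V ∩ f V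

/-- `X` is `𝒟`-forced iff every dense subset of `X` includes a `𝒟`-mosaic. -/
def DForced (𝒟 : Set (Set X)) : Prop :=
  ∀ S : Set X, Dense S → ∃ M ⊆ S, IsMosaic 𝒟 M

lemma dense_diff_of_nowhereDense {D Y : Set X} (hD : Dense D) (hY : IsNowhereDense Y) :
    Dense (D \ Y) := by
  rw [dense_iff_inter_open]
  intro U hU hUne
  have hW : IsOpen (U \ closure Y) := hU.sdiff isClosed_closure
  have hWne : (U \ closure Y).Nonempty := by
    by_contra h
    rw [not_nonempty_iff_eq_empty, diff_eq_empty] at h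
    have : U ⊆ interior (closure Y) := interior_maximal h hU
    rw [hY] at this
    exact hUne.ne_empty (subset_empty_iff.mp this)
  obtain ⟨x, hxW, hxD⟩ := hD.inter_open_nonempty _ hW hWne
  exact ⟨x, ⟨hxW.1, hxD, fun hxY => hxW.2 (subset_closure hxY)⟩⟩

theorem stmt_6 (𝒟 : Set (Set X)) (h𝒟 : ∀ D ∈ 𝒟, Dense D) (hf : DForced 𝒟) :
    {Y : Set X | IsNowhereDense Y} = {Y : Set X | ∀ D ∈ 𝒟, Dense (D \ Y)} := by
  ext Y
  simp only [mem_setOf_eq]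
  constructor
  · intro hY D hD
    exact dense_diff_of_nowhereDense (h𝒟 D hD) hY
  · intro h
    by_contra hY
    rw [IsNowhereDense, ← ne_eq, ← nonempty_iff_ne_empty] at hY
    set U := interior (closure Y) with hUdef
    have hUopen : IsOpen U := isOpen_interior
    -- S = Y ∪ (closure Y)ᶜ is dense
    have hSdense : Dense (Y ∪ (closure Y)ᶜ) := by
      intro x
      by_cases hx : x ∈ closure Y
      · exact closure_mono subset_union_left hx
      · exact subset_closure (Or.inr hx)
    obtain ⟨M, hMS, 𝒱, f, hVopen, -, hVdense, hfD, hMeq⟩ := hf _ hSdense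
    -- some V ∈ 𝒱 meets U
    obtain ⟨x, hxU, hx𝒱⟩ := hVdense.inter_open_nonempty U hUopen hY
    obtain ⟨V, hV𝒱, hxV⟩ := hx𝒱
    have hVU : (V ∩ U).Nonempty := ⟨x, hxV, hxU⟩
    have hD : f V ∈ 𝒟 := hfD V hV𝒱
    obtain ⟨y, hyVU, hyD, hyY⟩ :=
      (h (f V) hD).inter_open_nonempty (V ∩ U) ((hVopen V hV𝒱).inter hUopen) hVU
    have hyM : y ∈ M := by
      rw [hMeq]
      exact mem_biUnion hV𝒱 ⟨hyVU.1, hyD⟩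
    rcases hMS hyM with hyY' | hyC
    · exact hyY hyY'
    · exact hyC (interior_subset hyVU.2)
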